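/- Let α_1, …, α_d ∈ (0,1) be irrational with continued fraction convergent denominators (q_n^i)_{n≥0} for each i. If there exists a multi-index (n_1, …, n_d) ∈ ℕ^d with q_{n_1}^1 = q_{n_2}^2 = … = q_{n_d}^d =: q, then for every 1 ≤ p ≤ ∞ (with nearest neighbors computed in the L_p metric on 𝕋^d) one has h_1(q+1) = q. -/

import Mathlib

open scoped BigOperators ENNReal NNReal

/-- Distance from a real number to the nearest integer (the torus norm on ℝ/ℤ). -/
noncomputable def nint (t : ℝ) : ℝ := |t - round t|

/-- The `L_q` distance (for `1 ≤ q ≤ ∞`) between two points of the torus `ℝ^d/ℤ^d`,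
computed on representatives in `ℝ^d`. -/
noncomputable def lqDist (q : ℝ≥0∞) {d : ℕ} (x y : Fin d → ℝ) : ℝ :=
  if q = ⊤ then ⨆ i, nint (x i - y i)
  else (∑ i, nint (x i - y i) ^ q.toReal) ^ (1 / q.toReal)

/-- The `n`-th point of the `d`-dimensional Kronecker sequence `z_n = nα + ℤ^d`
(as a representative in `ℝ^d`). -/
noncomputable def kron {d : ℕ} (α : Fin d → ℝ) (n : ℕ) : Fin d → ℝ :=
  fun c => (n : ℝ) * α c

/-- `L_q`-distance on the torus between the `i`-th and `j`-th points of the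
Kronecker sequence of `α`. -/
noncomputable def kronDist (q : ℝ≥0∞) {d : ℕ} (α : Fin d → ℝ) (i j : ℕ) : ℝ :=
  lqDist q (kron α i) (kron α j)

/-- The index `j ∈ {1, …, N} \ {i}` of the nearest neighbor of `z_i` in
`S_N = {z_1, …, z_N}` w.r.t. the `L_q` torus metric; ties are broken by taking
the largest such index. -/
noncomputable def nnIndex (q : ℝ≥0∞) {d : ℕ} (α : Fin d → ℝ) (N i : ℕ) : ℕ :=
  sSup {j : ℕ | j ∈ Finset.Icc 1 N ∧ j ≠ i ∧
    ∀ m ∈ Finset.Icc 1 N, m ≠ i → kronDist q α i j ≤ kronDist q α i m}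

/-- `h_i(N) = |j - i|` where `z_j` is the nearest neighbor of `z_i` in `S_N`:
the counting-metric distance of `z_i` to its nearest neighbor. -/
noncomputable def hFun (q : ℝ≥0∞) {d : ℕ} (α : Fin d → ℝ) (N i : ℕ) : ℕ :=
  Nat.dist (nnIndex q α N i) i

/-- `g_N(α, ℤ^d, ‖·‖_q)`: the number of distinct nearest neighbor distances
among `d_q(z_i, nn_1(z_i))`, `i = 1, …, N`. -/
noncomputable def gN (q : ℝ≥0∞) {d : ℕ} (α : Fin d → ℝ) (N : ℕ) : ℕ :=
  ((Finset.Icc 1 N).image (fun i => kronDist q α i (nnIndex q α N i))).card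

/-- The Gauss map `x ↦ {1/x}` generating the continued fraction expansion. -/
noncomputable def gaussMap (x : ℝ) : ℝ := Int.fract x⁻¹

/-- The partial quotients of the continued fraction expansion `[0; a_1, a_2, …]`
of an irrational `α ∈ (0,1)`: `a_n = ⌊1 / G^[n-1](α)⌋` (with `a_0 = 0`). -/
noncomputable def cfA (α : ℝ) : ℕ → ℕ
  | 0 => 0
  | n + 1 => (⌊(gaussMap^[n] α)⁻¹⌋).toNat

/-- The denominators of the convergents of the continued fraction of `α`:
`q_0 = 1`, `q_1 = a_1`, `q_n = a_n q_{n-1} + q_{n-2}`. -/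
noncomputable def cfQ (α : ℝ) : ℕ → ℕ
  | 0 => 1
  | 1 => cfA α 1
  | n + 2 => cfA α (n + 2) * cfQ α (n + 1) + cfQ α n

/-! ### Auxiliary machinery: continued fraction numerators, the key identity
`q_n α - p_n = (-1)^n ∏_{j ≤ n} G^j(α)`, the determinant identity, and the
best approximation property of the convergent denominators. -/

/-- The numerators of the convergents: `p_0 = 0`, `p_1 = 1`,
`p_n = a_n p_{n-1} + p_{n-2}`. -/
noncomputable def cfP (α : ℝ) : ℕ → ℕ
  | 0 => 0
  | 1 => 1
  | n + 2 => cfA α (n + 2) * cfP α (n + 1) + cfP α n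

lemma nint_nonneg (t : ℝ) : 0 ≤ nint t := abs_nonneg _

lemma nint_le (t : ℝ) (m : ℤ) : nint t ≤ |t - m| := round_le t m

lemma nint_neg (t : ℝ) : nint (-t) = nint t := by
  apply le_antisymm
  · calc nint (-t) ≤ |(-t) - ((-(round t) : ℤ) : ℝ)| := nint_le _ _
      _ = nint t := by push_cast; rw [nint, ← abs_neg]; ring_nf
  · calc nint t ≤ |t - ((-(round (-t)) : ℤ) : ℝ)| := nint_le _ _
      _ = nint (-t) := by push_cast; rw [nint, ← abs_neg]; ring_nf

lemma iter_gauss {x : ℝ} (hirr : Irrational x) (hx : x ∈ Set.Ioo (0:ℝ) 1) (n : ℕ) :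
    Irrational (gaussMap^[n] x) ∧ gaussMap^[n] x ∈ Set.Ioo (0:ℝ) 1 := by
  induction n with
  | zero => exact ⟨hirr, hx⟩
  | succ n ih =>
    rw [Function.iterate_succ_apply']
    obtain ⟨ih1, _⟩ := ih
    have h2 : Irrational (gaussMap (gaussMap^[n] x)) := by
      rw [gaussMap, ← Int.self_sub_floor]
      exact Irrational.sub_intCast (ih1.inv) _
    exact ⟨h2, lt_of_le_of_ne (Int.fract_nonneg _) (Ne.symm h2.ne_zero), Int.fract_lt_one _⟩

lemma one_le_cfA {x : ℝ} (hirr : Irrational x) (hx : x ∈ Set.Ioo (0:ℝ) 1) (n : ℕ) :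
    1 ≤ cfA x (n + 1) := by
  obtain ⟨_, h0, h1⟩ := iter_gauss hirr hx n
  have h2 : (1:ℝ) < (gaussMap^[n] x)⁻¹ := (one_lt_inv₀ h0).2 h1
  have hfl : (1:ℤ) ≤ ⌊(gaussMap^[n] x)⁻¹⌋ := by
    rw [Int.le_floor]; push_cast; exact h2.le
  simp only [cfA]
  omega

lemma one_le_cfQ {x : ℝ} (hirr : Irrational x) (hx : x ∈ Set.Ioo (0:ℝ) 1) (n : ℕ) :
    1 ≤ cfQ x n := by
  induction n using Nat.twoStepInduction with
  | zero => simp [cfQ]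
  | one => simpa [cfQ] using one_le_cfA hirr hx 0
  | more n ih1 ih2 =>
    have := one_le_cfA hirr hx (n + 1)
    simp only [cfQ]
    nlinarith

lemma cfQ_mono {x : ℝ} (hirr : Irrational x) (hx : x ∈ Set.Ioo (0:ℝ) 1) (n : ℕ) :
    cfQ x n ≤ cfQ x (n + 1) := by
  cases n with
  | zero => simpa [cfQ] using one_le_cfA hirr hx 0
  | succ n =>
    have h1 := one_le_cfA hirr hx (n + 1)
    have h2 := one_le_cfQ hirr hx (n + 1)
    simp only [cfQ]
    nlinarith

lemma cfA_cast {x : ℝ} (hirr : Irrational x) (hx : x ∈ Set.Ioo (0:ℝ) 1) (n : ℕ) :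
    ((cfA x (n+1) : ℕ) : ℝ) = (⌊(gaussMap^[n] x)⁻¹⌋ : ℝ) := by
  have h := one_le_cfA hirr hx n
  simp only [cfA] at h ⊢
  have : (0:ℤ) ≤ ⌊(gaussMap^[n] x)⁻¹⌋ := by omega
  exact_mod_cast Int.toNat_of_nonneg this

lemma gauss_key {y : ℝ} (hy0 : 0 < y) :
    y * (gaussMap y + (⌊y⁻¹⌋ : ℝ)) = 1 := by
  rw [gaussMap, ← Int.self_sub_floor]
  field_simp
  ring

lemma cf_identity {x : ℝ} (hirr : Irrational x) (hx : x ∈ Set.Ioo (0:ℝ) 1) (n : ℕ) :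
    (cfQ x n : ℝ) * x - (cfP x n : ℝ) =
      (-1) ^ n * ∏ j ∈ Finset.range (n + 1), gaussMap^[j] x := by
  induction n using Nat.twoStepInduction with
  | zero => simp [cfQ, cfP]
  | one =>
    have h0 : x ≠ 0 := ne_of_gt hx.1
    have hk := gauss_key (y := x) hx.1
    simp only [cfQ, cfP, Finset.prod_range_succ, Finset.prod_range_one,
      Function.iterate_one, Function.iterate_zero, id_eq]
    rw [cfA_cast hirr hx 0]
    simp only [Function.iterate_zero, id_eq] at *
    nlinarith [hk]
  | more n ih1 ih2 =>
    have hxy := (iter_gauss hirr hx (n+1)).2.1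
    have hk := gauss_key (y := gaussMap^[n+1] x) hxy
    have hit : gaussMap^[n+2] x = gaussMap (gaussMap^[n+1] x) := by
      rw [Function.iterate_succ_apply']
    simp only [cfQ, cfP]
    push_cast
    rw [cfA_cast hirr hx (n+1)]
    rw [Finset.prod_range_succ (n := n+2), Finset.prod_range_succ (n := n+1), hit]
    set P := ∏ j ∈ Finset.range (n + 1), gaussMap^[j] x
    set y := gaussMap^[n+1] x
    set z := gaussMap y
    set A := (⌊y⁻¹⌋ : ℝ)
    have e1 : (cfQ x (n+1) : ℝ) * x - (cfP x (n+1) : ℝ) = (-1)^(n+1) * (P * y) := by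
      rw [ih2, Finset.prod_range_succ]
    have e2 : (cfQ x n : ℝ) * x - (cfP x n : ℝ) = (-1)^n * P := ih1
    have hyz : y * z = 1 - A * y := by nlinarith [hk]
    linear_combination A * e1 + e2 - ((-1:ℝ)^n * P) * hyz

lemma cf_det (x : ℝ) (n : ℕ) :
    (cfP x (n+1) : ℤ) * (cfQ x n : ℤ) - (cfP x n : ℤ) * (cfQ x (n+1) : ℤ) = (-1)^n := by
  induction n with
  | zero => simp [cfP, cfQ]
  | succ n ih =>
    simp only [cfP, cfQ]
    push_cast
    ring_nf
    ring_nf at ih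
    linarith [ih]

lemma prodG_pos {x : ℝ} (hirr : Irrational x) (hx : x ∈ Set.Ioo (0:ℝ) 1) (n : ℕ) :
    0 < ∏ j ∈ Finset.range (n + 1), gaussMap^[j] x :=
  Finset.prod_pos fun j _ => (iter_gauss hirr hx j).2.1

/-- Best approximation property: if `1 ≤ k < q_{n+1}` then every `|k α - m|`
is at least `|q_n α - p_n| = ∏_{j ≤ n} G^j(α)`. -/
lemma best_approx {x : ℝ} (hirr : Irrational x) (hx : x ∈ Set.Ioo (0:ℝ) 1) (n : ℕ)
    (k : ℤ) (hk1 : 1 ≤ k) (hk2 : k < (cfQ x (n+1) : ℤ)) (m : ℤ) :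
    (∏ j ∈ Finset.range (n + 1), gaussMap^[j] x) ≤ |(k : ℝ) * x - (m : ℝ)| := by
  set P0 := ∏ j ∈ Finset.range (n + 1), gaussMap^[j] x with hP0
  set P1 := ∏ j ∈ Finset.range (n + 2), gaussMap^[j] x with hP1
  have hP0pos : 0 < P0 := prodG_pos hirr hx n
  have hP1pos : 0 < P1 := prodG_pos hirr hx (n+1)
  set q0 : ℤ := (cfQ x n : ℤ)
  set q1 : ℤ := (cfQ x (n+1) : ℤ)
  set p0 : ℤ := (cfP x n : ℤ)
  set p1 : ℤ := (cfP x (n+1) : ℤ)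
  have hq0 : 1 ≤ q0 := by
    show (1:ℤ) ≤ ((cfQ x n : ℕ) : ℤ); exact_mod_cast one_le_cfQ hirr hx n
  have hq1 : 1 ≤ q1 := by
    show (1:ℤ) ≤ ((cfQ x (n+1) : ℕ) : ℤ); exact_mod_cast one_le_cfQ hirr hx (n+1)
  have hdet : p1 * q0 - p0 * q1 = (-1)^n := cf_det x n
  have he : ((-1:ℤ)^n) * ((-1:ℤ)^n) = 1 := by
    rw [← pow_add]
    exact Even.neg_one_pow ⟨n, by ring⟩
  set e : ℤ := (-1)^n
  set a : ℤ := e * (k * p1 - m * q1) with ha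
  set b : ℤ := e * (m * q0 - k * p0) with hb
  have hk' : a * q0 + b * q1 = k := by
    rw [ha, hb]
    linear_combination (e * k) * hdet + k * he
  have hm' : a * p0 + b * p1 = m := by
    rw [ha, hb]
    linear_combination (e * m) * hdet + m * he
  have hD0 : (q0 : ℝ) * x - (p0 : ℝ) = (-1)^n * P0 := by
    have := cf_identity hirr hx n; exact_mod_cast this
  have hD1 : (q1 : ℝ) * x - (p1 : ℝ) = (-1)^(n+1) * P1 := by
    have := cf_identity hirr hx (n+1); exact_mod_cast this
  have hdecomp : (k : ℝ) * x - (m : ℝ) = (-1:ℝ)^n * ((a:ℝ) * P0 - (b:ℝ) * P1) := by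
    have hkR : (a:ℝ) * (q0:ℝ) + (b:ℝ) * (q1:ℝ) = (k : ℝ) := by exact_mod_cast hk'
    have hmR : (a:ℝ) * (p0:ℝ) + (b:ℝ) * (p1:ℝ) = (m : ℝ) := by exact_mod_cast hm'
    calc (k:ℝ) * x - m = (a:ℝ) * ((q0:ℝ)*x - p0) + (b:ℝ)*((q1:ℝ)*x - p1) := by
          rw [← hkR, ← hmR]; ring
      _ = (-1:ℝ)^n * ((a:ℝ) * P0 - (b:ℝ) * P1) := by rw [hD0, hD1]; ring
  rw [hdecomp, abs_mul, abs_pow, abs_neg, abs_one, one_pow, one_mul]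
  rcases lt_trichotomy b 0 with hbneg | hb0 | hbpos
  · have haa : 1 ≤ a := by nlinarith [hk']
    have h1 : P0 ≤ (a:ℝ) * P0 - (b:ℝ) * P1 := by
      have : (1:ℝ) ≤ (a:ℝ) := by exact_mod_cast haa
      have hb' : b ≤ -1 := by omega
      have hbR : (b:ℝ) ≤ -1 := by exact_mod_cast hb'
      nlinarith
    exact le_abs.2 (Or.inl h1)
  · have haa : 1 ≤ a := by nlinarith [hk', hb0]
    have h1 : P0 ≤ (a:ℝ) * P0 - (b:ℝ) * P1 := by
      have : (1:ℝ) ≤ (a:ℝ) := by exact_mod_cast haa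
      have hbR : (b:ℝ) = 0 := by exact_mod_cast hb0
      nlinarith
    exact le_abs.2 (Or.inl h1)
  · have haa : a ≤ -1 := by nlinarith [hk']
    have h1 : P0 ≤ -((a:ℝ) * P0 - (b:ℝ) * P1) := by
      have : (a:ℝ) ≤ -1 := by exact_mod_cast haa
      have hbR : (1:ℝ) ≤ (b:ℝ) := by exact_mod_cast hbpos
      nlinarith
    exact le_abs.2 (Or.inr h1)

/-- The convergent denominator minimizes the torus norm among all `1 ≤ k ≤ q_n`. -/
lemma nint_cfQ_le {x : ℝ} (hirr : Irrational x) (hx : x ∈ Set.Ioo (0:ℝ) 1) (n : ℕ)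
    {k : ℕ} (hk1 : 1 ≤ k) (hk2 : k ≤ cfQ x n) :
    nint ((cfQ x n : ℝ) * x) ≤ nint ((k : ℝ) * x) := by
  rcases eq_or_lt_of_le hk2 with heq | hlt
  · rw [heq]
  · have hmono := cfQ_mono hirr hx n
    have hub : nint ((cfQ x n : ℝ) * x) ≤ ∏ j ∈ Finset.range (n + 1), gaussMap^[j] x := by
      calc nint ((cfQ x n : ℝ) * x) ≤ |(cfQ x n : ℝ) * x - ((cfP x n : ℤ) : ℝ)| :=
            nint_le _ _
        _ = |(cfQ x n : ℝ) * x - (cfP x n : ℝ)| := by push_cast; ring_nf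
        _ = |(-1:ℝ)^n * ∏ j ∈ Finset.range (n + 1), gaussMap^[j] x| := by
            rw [cf_identity hirr hx n]
        _ = ∏ j ∈ Finset.range (n + 1), gaussMap^[j] x := by
            rw [abs_mul, abs_pow, abs_neg, abs_one, one_pow, one_mul,
              abs_of_pos (prodG_pos hirr hx n)]
    have hlb : (∏ j ∈ Finset.range (n + 1), gaussMap^[j] x) ≤ nint ((k : ℝ) * x) := by
      have hk2' : (k : ℤ) < (cfQ x (n+1) : ℤ) := by exact_mod_cast lt_of_lt_of_le hlt hmono
      have := best_approx hirr hx n (k : ℤ) (by exact_mod_cast hk1) hk2' (round ((k:ℝ) * x))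
      simpa [nint] using this
    linarith

/-- Monotonicity of the `L_q` torus distance under coordinatewise comparison. -/
lemma lqDist_mono {d : ℕ} (p : ℝ≥0∞) (hp : 1 ≤ p) (x y u v : Fin d → ℝ)
    (h : ∀ c, nint (x c - y c) ≤ nint (u c - v c)) :
    lqDist p x y ≤ lqDist p u v := by
  unfold lqDist
  split_ifs with htop
  · exact ciSup_mono (Set.Finite.bddAbove (Set.finite_range _)) h
  · have hr : 0 < p.toReal := ENNReal.toReal_pos (fun h0 => by simp [h0] at hp) htop
    have hsum : ∑ c, nint (x c - y c) ^ p.toReal ≤ ∑ c, nint (u c - v c) ^ p.toReal :=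
      Finset.sum_le_sum fun c _ => Real.rpow_le_rpow (nint_nonneg _) (h c) hr.le
    exact Real.rpow_le_rpow
      (Finset.sum_nonneg fun c _ => Real.rpow_nonneg (nint_nonneg _) _) hsum (by positivity)

/-- If `α_1, …, α_d ∈ (0,1)` are irrational and there is a multi-index
`(n_1, …, n_d)` with `q_{n_1}^1 = … = q_{n_d}^d = Q`, then for every `1 ≤ p ≤ ∞`
one has `h_1(Q+1) = Q`. -/
theorem statement1 (d : ℕ) (hd : 1 ≤ d) (α : Fin d → ℝ)
    (hmem : ∀ i, α i ∈ Set.Ioo (0 : ℝ) 1) (hirr : ∀ i, Irrational (α i))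
    (n : Fin d → ℕ) (Q : ℕ) (hQ : ∀ i, cfQ (α i) (n i) = Q)
    (p : ℝ≥0∞) (hp : 1 ≤ p) :
    hFun p α (Q + 1) 1 = Q := by
  have hQ1 : 1 ≤ Q := by
    have h := one_le_cfQ (hirr ⟨0, hd⟩) (hmem ⟨0, hd⟩) (n ⟨0, hd⟩)
    rw [hQ ⟨0, hd⟩] at h
    exact h
  have hmain : ∀ m ∈ Finset.Icc 1 (Q+1), m ≠ 1 →
      kronDist p α 1 (Q+1) ≤ kronDist p α 1 m := by
    intro m hmIcc hm1
    rw [Finset.mem_Icc] at hmIcc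
    have hm2 : 2 ≤ m := by omega
    unfold kronDist
    apply lqDist_mono p hp
    intro c
    have e1 : kron α 1 c - kron α (Q+1) c = -(((Q:ℕ):ℝ) * α c) := by
      simp only [kron]; push_cast; ring
    have e2 : kron α 1 c - kron α m c = -((((m-1 : ℕ)):ℝ) * α c) := by
      simp only [kron]
      rw [Nat.cast_sub (by omega)]
      push_cast
      ring
    rw [e1, e2, nint_neg, nint_neg]
    have h := nint_cfQ_le (hirr c) (hmem c) (n c) (k := m - 1)
      (by omega) (by rw [hQ c]; omega)
    rw [hQ c] at h
    exact h
  have hmem' : Q + 1 ∈ {j : ℕ | j ∈ Finset.Icc 1 (Q+1) ∧ j ≠ 1 ∧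
      ∀ m ∈ Finset.Icc 1 (Q+1), m ≠ 1 → kronDist p α 1 j ≤ kronDist p α 1 m} :=
    ⟨Finset.mem_Icc.mpr ⟨by omega, le_refl _⟩, by omega, hmain⟩
  have hub : ∀ j ∈ {j : ℕ | j ∈ Finset.Icc 1 (Q+1) ∧ j ≠ 1 ∧
      ∀ m ∈ Finset.Icc 1 (Q+1), m ≠ 1 → kronDist p α 1 j ≤ kronDist p α 1 m},
      j ≤ Q + 1 := fun j hj => (Finset.mem_Icc.mp hj.1).2
  have hset : nnIndex p α (Q+1) 1 = Q + 1 := by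
    unfold nnIndex
    exact le_antisymm (csSup_le ⟨Q+1, hmem'⟩ hub) (le_csSup ⟨Q+1, hub⟩ hmem')
  unfold hFun
  rw [hset]
  simp [Nat.dist]
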